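/- arXiv:2401.00439 — 3 statements merged into one kernel-verified Lean document; each statement's English description precedes it below -/
import Mathlib

section
/- Let S be a 2×2 complex unitary symmetric matrix such that Id + S is invertible. Then the Cayley transform M := i(Id + S)⁻¹(Id − S) is a symmetric matrix with real entries (i.e. M = Mᵀ and all entries of M equal their complex conjugates). -/
open Matrix

lemma inv_comm' {A B : Matrix (Fin 2) (Fin 2) ℂ} (hA : IsUnit A.det)
    (h : A * B = B * A) : A⁻¹ * B = B * A⁻¹ := by
  have h2 : A⁻¹ * (A * B) * A⁻¹ = B * A⁻¹ := by
    rw [← Matrix.mul_assoc, Matrix.nonsing_inv_mul _ hA, Matrix.one_mul]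
  rw [← h2, h, Matrix.mul_assoc A⁻¹ (B * A) A⁻¹, Matrix.mul_assoc B A A⁻¹,
    Matrix.mul_nonsing_inv _ hA, Matrix.mul_one]

/-- The Cayley transform `M = i (Id + S)⁻¹ (Id − S)` of a 2×2 unitary symmetric
matrix `S` with `Id + S` invertible is symmetric with real entries. -/
theorem stmt_1 (S : Matrix (Fin 2) (Fin 2) ℂ)
    (hU : S * Sᴴ = 1) (hSym : S = Sᵀ) (hdet : (1 + S).det ≠ 0)
    (M : Matrix (Fin 2) (Fin 2) ℂ)
    (hM : M = Complex.I • ((1 + S)⁻¹ * (1 - S))) :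
    M = Mᵀ ∧ ∀ i j, (M i j).im = 0 := by
  have hA : IsUnit (1 + S).det := hdet.isUnit
  have hA' : IsUnit (S + 1).det := by rwa [add_comm] at hA
  have hSinv : S⁻¹ = Sᴴ := Matrix.inv_eq_right_inv hU
  have hSdet : IsUnit S.det := by
    have := congrArg Matrix.det hU
    rw [Matrix.det_mul, Matrix.det_one] at this
    exact IsUnit.of_mul_eq_one _ this
  have hc : (1 + S)⁻¹ * (1 - S) = (1 - S) * (1 + S)⁻¹ :=
    inv_comm' hA (by noncomm_ring)
  -- transpose symmetry
  have hT : M = Mᵀ := by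
    rw [hM, Matrix.transpose_smul, Matrix.transpose_mul, Matrix.transpose_nonsing_inv,
      Matrix.transpose_add, Matrix.transpose_sub, Matrix.transpose_one, ← hSym, ← hc]
  -- hermitian: Mᴴ = M
  have hH : Mᴴ = M := by
    have h1 : (1 : Matrix (Fin 2) (Fin 2) ℂ) - Sᴴ = S⁻¹ * (S - 1) := by
      rw [Matrix.mul_sub, Matrix.nonsing_inv_mul _ hSdet, Matrix.mul_one, hSinv]
    have h2 : (1 : Matrix (Fin 2) (Fin 2) ℂ) + Sᴴ = S⁻¹ * (S + 1) := by
      rw [Matrix.mul_add, Matrix.nonsing_inv_mul _ hSdet, Matrix.mul_one, hSinv]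
    have h3 : ((1 : Matrix (Fin 2) (Fin 2) ℂ) + Sᴴ)⁻¹ = (S + 1)⁻¹ * S := by
      rw [h2, Matrix.mul_inv_rev, Matrix.nonsing_inv_nonsing_inv _ hSdet]
    have hcs : (S + 1)⁻¹ * S = S * (S + 1)⁻¹ := inv_comm' hA' (by noncomm_ring)
    have hcs2 : (S + 1)⁻¹ * (S - 1) = (S - 1) * (S + 1)⁻¹ := inv_comm' hA' (by noncomm_ring)
    have hSS : (S - 1) * S = S * (S - 1) := by noncomm_ring
    rw [hM, Matrix.conjTranspose_smul, Matrix.conjTranspose_mul,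
      Matrix.conjTranspose_nonsing_inv, Matrix.conjTranspose_sub, Matrix.conjTranspose_add,
      Matrix.conjTranspose_one]
    rw [h1, h3]
    set P := (S + 1)⁻¹ with hP
    have key : S⁻¹ * (S - 1) * (P * S) = P * (S - 1) := by
      calc S⁻¹ * (S - 1) * (P * S)
          = S⁻¹ * ((S - 1) * P) * S := by noncomm_ring
        _ = S⁻¹ * (P * (S - 1)) * S := by rw [hcs2]
        _ = S⁻¹ * P * ((S - 1) * S) := by noncomm_ring
        _ = S⁻¹ * P * (S * (S - 1)) := by rw [hSS]
        _ = S⁻¹ * (P * S) * (S - 1) := by noncomm_ring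
        _ = S⁻¹ * (S * P) * (S - 1) := by rw [hcs]
        _ = S⁻¹ * S * (P * (S - 1)) := by noncomm_ring
        _ = P * (S - 1) := by rw [Matrix.nonsing_inv_mul _ hSdet, Matrix.one_mul]
    rw [key]
    have hneg : (1 + S)⁻¹ * (1 - S) = -(P * (S - 1)) := by
      rw [hP, add_comm, ← neg_sub S 1, Matrix.mul_neg]
    rw [hneg, Complex.star_def, Complex.conj_I, neg_smul, smul_neg]
  refine ⟨hT, fun i j => ?_⟩
  have hconj : (starRingEnd ℂ) (M i j) = M i j := by
    have h0 := congrFun (congrFun hH i) j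
    simp only [Matrix.conjTranspose_apply] at h0
    have hsymm : M i j = M j i := by conv_lhs => rw [hT, Matrix.transpose_apply]
    calc (starRingEnd ℂ) (M i j) = star (M j i) := by rw [hsymm]; rfl
      _ = M i j := h0
  exact Complex.conj_eq_iff_im.mp hconj
end

section
/- Fix θ ∈ [0, π) and η ∈ [0, 2π). A real number ν > 0 is such that the 2×2 matrix [[sinθ·e^{−i√ν/2} − cosθ·e^{i√ν/2}e^{iη}, sinθ·e^{i√ν/2} − cosθ·e^{−i√ν/2}e^{iη}], [i√ν(cosθ·e^{−i√ν/2} − sinθ·e^{i√ν/2}e^{iη}), i√ν(−cosθ·e^{i√ν/2} + sinθ·e^{−i√ν/2}e^{iη})]] has nontrivial kernel if and only if sin(2θ)·cos η = cos√ν. -/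
open Matrix

/-- For `θ ∈ [0, π)`, `η ∈ [0, 2π)` and `ν > 0`, the 2×2 matrix coming from the
weighted Kirchhoff transmission conditions has nontrivial kernel iff
`sin(2θ) cos η = cos √ν`. -/
theorem stmt_4 (θ η ν : ℝ) (hθ : θ ∈ Set.Ico 0 Real.pi)
    (hη : η ∈ Set.Ico 0 (2 * Real.pi)) (hν : 0 < ν) :
    (∃ v : Fin 2 → ℂ, v ≠ 0 ∧
      (!![(Real.sin θ : ℂ) * Complex.exp (-(Complex.I * (Real.sqrt ν : ℂ)) / 2)
            - (Real.cos θ : ℂ) * Complex.exp (Complex.I * (Real.sqrt ν : ℂ) / 2)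
              * Complex.exp (Complex.I * (η : ℂ)),
          (Real.sin θ : ℂ) * Complex.exp (Complex.I * (Real.sqrt ν : ℂ) / 2)
            - (Real.cos θ : ℂ) * Complex.exp (-(Complex.I * (Real.sqrt ν : ℂ)) / 2)
              * Complex.exp (Complex.I * (η : ℂ));
          Complex.I * (Real.sqrt ν : ℂ) *
            ((Real.cos θ : ℂ) * Complex.exp (-(Complex.I * (Real.sqrt ν : ℂ)) / 2)
              - (Real.sin θ : ℂ) * Complex.exp (Complex.I * (Real.sqrt ν : ℂ) / 2)
                * Complex.exp (Complex.I * (η : ℂ))),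
          Complex.I * (Real.sqrt ν : ℂ) *
            (-(Real.cos θ : ℂ) * Complex.exp (Complex.I * (Real.sqrt ν : ℂ) / 2)
              + (Real.sin θ : ℂ) * Complex.exp (-(Complex.I * (Real.sqrt ν : ℂ)) / 2)
                * Complex.exp (Complex.I * (η : ℂ)))]).mulVec v = 0) ↔
    Real.sin (2 * θ) * Real.cos η = Real.cos (Real.sqrt ν) := by
  rw [Matrix.exists_mulVec_eq_zero_iff, Matrix.det_fin_two_of]
  have hs0 : (Real.sqrt ν : ℂ) ≠ 0 := by
    exact_mod_cast (Real.sqrt_pos.mpr hν).ne'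
  set s : ℂ := (Real.sqrt ν : ℂ) with hsdef
  set S : ℂ := (Real.sin θ : ℂ) with hSdef
  set C : ℂ := (Real.cos θ : ℂ) with hCdef
  set a : ℂ := Complex.exp (Complex.I * s / 2) with hadef
  set b : ℂ := Complex.exp (-(Complex.I * s) / 2) with hbdef
  set e : ℂ := Complex.exp (Complex.I * (η : ℂ)) with hedef
  set f : ℂ := Complex.exp (-(Complex.I * (η : ℂ))) with hfdef
  have hab : a * b = 1 := by
    rw [hadef, hbdef, ← Complex.exp_add,
      show Complex.I * s / 2 + -(Complex.I * s) / 2 = 0 by ring, Complex.exp_zero]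
  have hef : e * f = 1 := by
    rw [hedef, hfdef, ← Complex.exp_add,
      show Complex.I * (η : ℂ) + -(Complex.I * (η : ℂ)) = 0 by ring, Complex.exp_zero]
  have hpy : S * S + C * C = 1 := by
    rw [hSdef, hCdef]
    have h : Real.sin θ * Real.sin θ + Real.cos θ * Real.cos θ = 1 := by
      nlinarith [Real.sin_sq_add_cos_sq θ]
    exact_mod_cast h
  have hcos : (Real.cos (Real.sqrt ν) : ℂ) = (a * a + b * b) / 2 := by
    rw [Complex.ofReal_cos, Complex.cos, hadef, hbdef, ← Complex.exp_add, ← Complex.exp_add]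
    rw [hsdef]
    ring_nf
  have hcosη : (Real.cos η : ℂ) = (e + f) / 2 := by
    rw [Complex.ofReal_cos, Complex.cos, hedef, hfdef]
    ring_nf
  have hsin2 : (Real.sin (2 * θ) : ℂ) = 2 * S * C := by
    rw [Real.sin_two_mul, hSdef, hCdef]
    push_cast
    ring
  have key : (S * b - C * a * e) * (Complex.I * s * (-C * a + S * b * e))
      - (S * a - C * b * e) * (Complex.I * s * (C * b - S * a * e))
      = Complex.I * s * e * 2
          * ((Real.cos (Real.sqrt ν) : ℂ) - (Real.sin (2 * θ) : ℂ) * (Real.cos η : ℂ)) := by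
    rw [hcos, hcosη, hsin2]
    linear_combination (Complex.I * s * (a * a + b * b) * e) * hpy
      - (2 * Complex.I * s * S * C * (1 + e * e)) * hab
      + (2 * Complex.I * s * S * C) * hef
  rw [key, mul_eq_zero, sub_eq_zero]
  have h2 : Complex.I * s * e * 2 ≠ 0 := by
    simp [Complex.I_ne_zero, hs0, hedef, Complex.exp_ne_zero]
  constructor
  · rintro (h | h)
    · exact absurd h h2
    · exact_mod_cast h.symm
  · intro h
    right
    exact_mod_cast h.symm
end

section
/- Fix η ∈ ℝ. Consider γ± solving γ'' + νγ = 0 on I± = (0, ±1/2) with the anti-Kirchhoff conditions γ⁺(0) = −γ⁻(0), (γ⁺)'(0) = −(γ⁻)'(0), and quasi-periodic conditions γ⁻(−1/2) = e^{iη}γ⁺(1/2), (γ⁻)'(−1/2) = e^{iη}(γ⁺)'(1/2). The eigenvalues are exactly ν = (η + (2k+1)π)² for k ∈ ℤ, with eigenfunctions γ±(x) = ±e^{−i(η + (2k+1)π)x}. -/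
/-- Eigenfunction of the anti-Kirchhoff quasi-periodic 1D model:
`γ(x) = e^{−i(η + (2k+1)π)x}`; the eigenpair is `(γ⁺, γ⁻) = (γ, −γ)`. -/
noncomputable def gammaAK (η : ℝ) (k : ℤ) (x : ℝ) : ℂ :=
  Complex.exp (-Complex.I * ((η : ℂ) + (2 * (k : ℂ) + 1) * (Real.pi : ℂ)) * (x : ℂ))

open Complex in
lemma hasDerivAt_cexp_mul (c : ℂ) (x : ℝ) :
    HasDerivAt (fun y : ℝ => Complex.exp (c * y)) (c * Complex.exp (c * x)) x := by
  have h : HasDerivAt (fun z : ℂ => Complex.exp (c * z)) (c * Complex.exp (c * (x : ℂ))) (x : ℂ) := by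
    simpa [Function.comp_def, mul_comm] using
      (Complex.hasDerivAt_exp (c * (x : ℂ))).comp (x : ℂ) ((hasDerivAt_id (x : ℂ)).const_mul c)
  exact h.comp_ofReal

lemma hasDerivAt_ccos_mul (c : ℂ) (x : ℝ) :
    HasDerivAt (fun y : ℝ => Complex.cos (c * y)) (-(c * Complex.sin (c * x))) x := by
  have h : HasDerivAt (fun z : ℂ => Complex.cos (c * z)) (-(c * Complex.sin (c * (x : ℂ)))) (x : ℂ) := by
    simpa [Function.comp_def, mul_comm] using
      (Complex.hasDerivAt_cos (c * (x : ℂ))).comp (x : ℂ) ((hasDerivAt_id (x : ℂ)).const_mul c)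
  exact h.comp_ofReal

lemma hasDerivAt_csin_mul (c : ℂ) (x : ℝ) :
    HasDerivAt (fun y : ℝ => Complex.sin (c * y)) (c * Complex.cos (c * x)) x := by
  have h : HasDerivAt (fun z : ℂ => Complex.sin (c * z)) (c * Complex.cos (c * (x : ℂ))) (x : ℂ) := by
    simpa [Function.comp_def, mul_comm] using
      (Complex.hasDerivAt_sin (c * (x : ℂ))).comp (x : ℂ) ((hasDerivAt_id (x : ℂ)).const_mul c)
  exact h.comp_ofReal

/-- `sin(ωx)/ω`, extended to `ω = 0` as `x`. -/
noncomputable def sAux (ω : ℂ) (x : ℝ) : ℂ := if ω = 0 then (x : ℂ) else Complex.sin (ω * x) / ω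

lemma sAux_zero (ω : ℂ) : sAux ω 0 = 0 := by
  rcases eq_or_ne ω 0 with h | h
  · simp [sAux, h]
  · simp [sAux, h]

lemma sAux_neg (ω : ℂ) (x : ℝ) : sAux ω (-x) = -sAux ω x := by
  rcases eq_or_ne ω 0 with h | h
  · simp [sAux, h]
  · simp only [sAux, if_neg h]
    push_cast
    rw [mul_neg, Complex.sin_neg, neg_div]

lemma hasDerivAt_sAux (ω : ℂ) (x : ℝ) : HasDerivAt (sAux ω) (Complex.cos (ω * x)) x := by
  rcases eq_or_ne ω 0 with h | h
  · subst h
    have hfun : sAux (0 : ℂ) = fun y : ℝ => (y : ℂ) := funext fun y => if_pos rfl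
    rw [hfun, zero_mul, Complex.cos_zero]
    simpa using (hasDerivAt_id x).ofReal_comp
  · have hfun : sAux ω = fun y : ℝ => Complex.sin (ω * y) / ω := funext fun y => if_neg h
    rw [hfun]
    have := (hasDerivAt_csin_mul ω x).div_const ω
    simpa [mul_div_cancel_left₀ _ h] using this

lemma continuous_sAux (ω : ℂ) : Continuous (sAux ω) := by
  rw [continuous_iff_continuousAt]
  exact fun x => (hasDerivAt_sAux ω x).continuousAt

lemma sq_sAux (ω : ℂ) (x : ℝ) : ω ^ 2 * sAux ω x ^ 2 = Complex.sin (ω * x) ^ 2 := by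
  rcases eq_or_ne ω 0 with h | h
  · simp [sAux, h]
  · simp only [sAux, if_neg h]
    field_simp

lemma omega_sin_eq (ω : ℂ) (x : ℝ) : ω * Complex.sin (ω * x) = ω ^ 2 * sAux ω x := by
  rcases eq_or_ne ω 0 with h | h
  · simp [sAux, h]
  · simp only [sAux, if_neg h]
    field_simp

lemma pyth_sAux (ω : ℂ) (x : ℝ) :
    Complex.cos (ω * x) ^ 2 + ω ^ 2 * sAux ω x ^ 2 = 1 := by
  rw [sq_sAux]; exact Complex.cos_sq_add_sin_sq _

/-- Representation of any `C²` solution of `f'' + ω² f = 0` on an interval containing `0`. -/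
lemma rep_ode (ω : ℂ) {f : ℝ → ℂ} (hf : ContDiff ℝ 2 f) {lo hi : ℝ}
    (h0l : lo ≤ 0) (h0h : (0 : ℝ) ≤ hi)
    (hode : ∀ x ∈ Set.Icc lo hi, deriv (deriv f) x + ω ^ 2 * f x = 0) :
    ∀ x ∈ Set.Icc lo hi,
      (f x = f 0 * Complex.cos (ω * x) + deriv f 0 * sAux ω x ∧
        deriv f x = -(ω ^ 2) * f 0 * sAux ω x + deriv f 0 * Complex.cos (ω * x)) := by
  have hfd : Differentiable ℝ f := hf.differentiable (by norm_num)
  have hf2 : ContDiff ℝ (1 + 1) f := by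
    convert hf using 2
    norm_num
  have hf' : ContDiff ℝ 1 (deriv f) := (contDiff_succ_iff_deriv.mp hf2).2.2
  have hfd' : Differentiable ℝ (deriv f) := hf'.differentiable one_ne_zero
  have hd2 : ∀ x, HasDerivAt (deriv f) (deriv (deriv f) x) x := fun x =>
    (hfd' x).hasDerivAt
  have hccos : Continuous fun y : ℝ => Complex.cos (ω * y) := by
    rw [continuous_iff_continuousAt]
    exact fun x => (hasDerivAt_ccos_mul ω x).continuousAt
  set W1 : ℝ → ℂ := fun x => f x * Complex.cos (ω * x) - deriv f x * sAux ω x with hW1def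
  set W2 : ℝ → ℂ := fun x => -(ω ^ 2) * (f x * sAux ω x) - deriv f x * Complex.cos (ω * x)
    with hW2def
  have hW1z : ∀ x ∈ Set.Icc lo hi, HasDerivAt W1 0 x := by
    intro x hx
    have h := ((hfd x).hasDerivAt.mul (hasDerivAt_ccos_mul ω x)).sub
      ((hd2 x).mul (hasDerivAt_sAux ω x))
    refine h.congr_deriv (Eq.symm ?_)
    have hE := hode x hx
    have hs := omega_sin_eq ω x
    linear_combination (f x) * hs + sAux ω x * hE
  have hW2z : ∀ x ∈ Set.Icc lo hi, HasDerivAt W2 0 x := by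
    intro x hx
    have h := (((hfd x).hasDerivAt.mul (hasDerivAt_sAux ω x)).const_mul (-(ω ^ 2))).sub
      ((hd2 x).mul (hasDerivAt_ccos_mul ω x))
    refine h.congr_deriv (Eq.symm ?_)
    have hE := hode x hx
    have hs := omega_sin_eq ω x
    linear_combination (-(deriv f x)) * hs + Complex.cos (ω * x) * hE
  have hcW1 : Continuous W1 := ((hfd.continuous.mul hccos).sub
    ((hfd'.continuous).mul (continuous_sAux ω)))
  have hcW2 : Continuous W2 := ((continuous_const.mul
    (hfd.continuous.mul (continuous_sAux ω))).sub ((hfd'.continuous).mul hccos))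
  have h0mem : (0 : ℝ) ∈ Set.Icc lo hi := ⟨h0l, h0h⟩
  have hW1c : ∀ x ∈ Set.Icc lo hi, W1 x = W1 lo :=
    constant_of_has_deriv_right_zero hcW1.continuousOn
      (fun x hx => ((hW1z x (Set.Ico_subset_Icc_self hx)).hasDerivWithinAt))
  have hW2c : ∀ x ∈ Set.Icc lo hi, W2 x = W2 lo :=
    constant_of_has_deriv_right_zero hcW2.continuousOn
      (fun x hx => ((hW2z x (Set.Ico_subset_Icc_self hx)).hasDerivWithinAt))
  have hW10 : ∀ x ∈ Set.Icc lo hi, W1 x = f 0 := by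
    intro x hx
    rw [hW1c x hx, ← hW1c 0 h0mem]
    simp [hW1def, sAux_zero]
  have hW20 : ∀ x ∈ Set.Icc lo hi, W2 x = -deriv f 0 := by
    intro x hx
    rw [hW2c x hx, ← hW2c 0 h0mem]
    simp [hW2def, sAux_zero]
  intro x hx
  have e1 : f x * Complex.cos (ω * x) - deriv f x * sAux ω x = f 0 := hW10 x hx
  have e2 : -(ω ^ 2) * (f x * sAux ω x) - deriv f x * Complex.cos (ω * x) = -deriv f 0 :=
    hW20 x hx
  have hp := pyth_sAux ω x
  constructor
  · linear_combination Complex.cos (ω * x) * e1 - sAux ω x * e2 - f x * hp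
  · linear_combination (-(ω ^ 2) * sAux ω x) * e1 - Complex.cos (ω * x) * e2 - deriv f x * hp

/-- The 1D model with anti-Kirchhoff conditions `γ⁺(0) = −γ⁻(0)`,
`(γ⁺)'(0) = −(γ⁻)'(0)` and quasi-periodic conditions of parameter `η` has
eigenvalues exactly `ν = (η + (2k+1)π)²`, `k ∈ ℤ`, with eigenfunctions
`γ±(x) = ±e^{−i(η + (2k+1)π)x}`. -/
theorem stmt_13 (η : ℝ) :
    (∀ k : ℤ,
      (∀ x : ℝ, deriv (deriv (gammaAK η k)) x
          + ((η : ℂ) + (2 * (k : ℂ) + 1) * (Real.pi : ℂ)) ^ 2 * gammaAK η k x = 0) ∧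
      (∀ x : ℝ, deriv (deriv (fun y : ℝ => -gammaAK η k y)) x
          + ((η : ℂ) + (2 * (k : ℂ) + 1) * (Real.pi : ℂ)) ^ 2 * (-gammaAK η k x) = 0) ∧
      gammaAK η k 0 = -(-gammaAK η k 0) ∧
      deriv (gammaAK η k) 0 = -(deriv (fun y : ℝ => -gammaAK η k y) 0) ∧
      (-gammaAK η k (-(1 / 2))) =
        Complex.exp (Complex.I * (η : ℂ)) * gammaAK η k (1 / 2) ∧
      deriv (fun y : ℝ => -gammaAK η k y) (-(1 / 2)) =
        Complex.exp (Complex.I * (η : ℂ)) * deriv (gammaAK η k) (1 / 2)) ∧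
    (∀ (ν : ℂ) (gp gm : ℝ → ℂ), ContDiff ℝ 2 gp → ContDiff ℝ 2 gm →
      (∀ x ∈ Set.Icc (0 : ℝ) (1 / 2), deriv (deriv gp) x + ν * gp x = 0) →
      (∀ x ∈ Set.Icc (-(1 / 2) : ℝ) 0, deriv (deriv gm) x + ν * gm x = 0) →
      gp 0 = -(gm 0) → deriv gp 0 = -(deriv gm 0) →
      gm (-(1 / 2)) = Complex.exp (Complex.I * (η : ℂ)) * gp (1 / 2) →
      deriv gm (-(1 / 2)) = Complex.exp (Complex.I * (η : ℂ)) * deriv gp (1 / 2) →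
      ((∃ x ∈ Set.Icc (0 : ℝ) (1 / 2), gp x ≠ 0) ∨
        (∃ x ∈ Set.Icc (-(1 / 2) : ℝ) 0, gm x ≠ 0)) →
      ∃ k : ℤ, ν = ((η : ℂ) + (2 * (k : ℂ) + 1) * (Real.pi : ℂ)) ^ 2) := by
  constructor
  · -- forward direction: explicit eigenfunctions
    intro k
    set θ : ℂ := (η : ℂ) + (2 * (k : ℂ) + 1) * (Real.pi : ℂ) with hθ
    have hgam : gammaAK η k = fun x : ℝ => Complex.exp (-Complex.I * θ * x) := rfl
    have hd1 : deriv (gammaAK η k)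
        = fun x : ℝ => -Complex.I * θ * Complex.exp (-Complex.I * θ * x) := by
      funext x
      exact (hasDerivAt_cexp_mul (-Complex.I * θ) x).deriv
    have hd2 : deriv (deriv (gammaAK η k))
        = fun x : ℝ => (-Complex.I * θ) ^ 2 * Complex.exp (-Complex.I * θ * x) := by
      funext x
      rw [hd1, ((hasDerivAt_cexp_mul (-Complex.I * θ) x).const_mul (-Complex.I * θ)).deriv]
      ring
    have hode : ∀ x : ℝ, deriv (deriv (gammaAK η k)) x + θ ^ 2 * gammaAK η k x = 0 := by
      intro x
      rw [hd2, hgam]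
      simp only
      linear_combination (θ ^ 2 * Complex.exp (-Complex.I * θ * (x : ℂ))) * Complex.I_sq
    have hndd : deriv (fun y : ℝ => -gammaAK η k y) = fun y : ℝ => -(deriv (gammaAK η k) y) :=
      funext fun y => deriv.neg
    have h2 : Complex.exp (Complex.I * (η : ℂ) + -Complex.I * θ * ((1 / 2 : ℝ) : ℂ))
        = -Complex.exp (-Complex.I * θ * ((-(1 / 2) : ℝ) : ℂ)) := by
      rw [show Complex.I * (η : ℂ) + -Complex.I * θ * ((1 / 2 : ℝ) : ℂ)
          = ((-(k + 1) : ℤ) : ℂ) * (2 * (Real.pi : ℂ) * Complex.I)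
            + ((Real.pi : ℂ) * Complex.I + -Complex.I * θ * ((-(1 / 2) : ℝ) : ℂ)) from by
        rw [hθ]; push_cast; ring]
      rw [Complex.exp_add, Complex.exp_int_mul_two_pi_mul_I, Complex.exp_add,
        Complex.exp_pi_mul_I]
      ring
    have h3 := Complex.exp_add (Complex.I * (η : ℂ)) (-Complex.I * θ * ((1 / 2 : ℝ) : ℂ))
    refine ⟨hode, ?_, ?_, ?_, ?_, ?_⟩
    · intro x
      rw [show (fun y : ℝ => -gammaAK η k y) = fun y : ℝ => -(gammaAK η k y) from rfl]
      rw [show deriv (fun y : ℝ => -(gammaAK η k y)) = fun y : ℝ => -(deriv (gammaAK η k) y)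
        from funext fun y => deriv.neg]
      rw [show deriv (fun y : ℝ => -(deriv (gammaAK η k) y)) x = -(deriv (deriv (gammaAK η k)) x)
        from deriv.neg]
      linear_combination -hode x
    · ring
    · rw [hndd]
      ring
    · rw [hgam]
      simp only
      linear_combination -h2 + h3
    · rw [hndd, hd1]
      simp only
      linear_combination (Complex.I * θ) * h2 - (Complex.I * θ) * h3
  · -- converse: any nontrivial solution has the right eigenvalue
    intro ν gp gm hgp hgm hodep hodem hbc0 hbc0' hqp hqp' hnz
    obtain ⟨ω, hω⟩ := IsAlgClosed.exists_pow_nat_eq ν (n := 2) (by norm_num)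
    subst hω
    have hrp := rep_ode ω hgp (le_refl (0 : ℝ)) (by norm_num) hodep
    have hrm := rep_ode ω hgm (by norm_num) (le_refl (0 : ℝ)) hodem
    set A := gp 0 with hA0
    set B := deriv gp 0 with hB0
    have hgm0 : gm 0 = -A := by linear_combination hbc0
    have hgm0' : deriv gm 0 = -B := by linear_combination hbc0'
    set E := Complex.exp (Complex.I * (η : ℂ)) with hEdef
    have hE0 : E ≠ 0 := Complex.exp_ne_zero _
    set C := Complex.cos (ω * ((1 / 2 : ℝ) : ℂ)) with hC
    set S := sAux ω (1 / 2) with hS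
    have hmem_p : (1 / 2 : ℝ) ∈ Set.Icc (0 : ℝ) (1 / 2) := by constructor <;> norm_num
    have hmem_m : (-(1 / 2) : ℝ) ∈ Set.Icc (-(1 / 2) : ℝ) 0 := by constructor <;> norm_num
    obtain ⟨hp1, hp2⟩ := hrp (1 / 2) hmem_p
    obtain ⟨hm1, hm2⟩ := hrm (-(1 / 2)) hmem_m
    have hcneg : Complex.cos (ω * ((-(1 / 2) : ℝ) : ℂ)) = C := by
      rw [hC]
      push_cast
      rw [show ω * (-(1 / 2) : ℂ) = -(ω * (1 / 2 : ℂ)) from by ring, Complex.cos_neg]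
    have hsneg : sAux ω (-(1 / 2)) = -S := by rw [hS]; exact sAux_neg ω (1 / 2)
    rw [hgm0, hgm0', hcneg, hsneg] at hm1 hm2
    have heq1 : -A * C * (1 + E) + B * S * (1 - E) = 0 := by
      linear_combination -hm1 + hqp + E * hp1
    have heq2 : -(ω ^ 2) * A * S * (1 - E) - B * C * (1 + E) = 0 := by
      linear_combination -hm2 + hqp' + E * hp2
    have hAB : ¬(A = 0 ∧ B = 0) := by
      rintro ⟨hA, hB⟩
      rcases hnz with ⟨x, hx, hne⟩ | ⟨x, hx, hne⟩
      · exact hne (by rw [(hrp x hx).1, hA, hB]; ring)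
      · exact hne (by rw [(hrm x hx).1, hgm0, hgm0', hA, hB]; ring)
    have hdet : C ^ 2 * (1 + E) ^ 2 + ω ^ 2 * S ^ 2 * (1 - E) ^ 2 = 0 := by
      by_contra hd
      refine hAB ⟨?_, ?_⟩
      · have hz : (C ^ 2 * (1 + E) ^ 2 + ω ^ 2 * S ^ 2 * (1 - E) ^ 2) * A = 0 := by
          linear_combination (-C * (1 + E)) * heq1 + (-S * (1 - E)) * heq2
        exact (mul_eq_zero.mp hz).resolve_left hd
      · have hz : (C ^ 2 * (1 + E) ^ 2 + ω ^ 2 * S ^ 2 * (1 - E) ^ 2) * B = 0 := by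
          linear_combination (ω ^ 2 * S * (1 - E)) * heq1 + (-C * (1 + E)) * heq2
        exact (mul_eq_zero.mp hz).resolve_left hd
    set Sn := Complex.sin (ω * ((1 / 2 : ℝ) : ℂ)) with hSn
    have hS2 : ω ^ 2 * S ^ 2 = Sn ^ 2 := sq_sAux ω (1 / 2)
    have hpy : C ^ 2 + Sn ^ 2 = 1 := Complex.cos_sq_add_sin_sq _
    have hcω : Complex.cos ω = C ^ 2 - Sn ^ 2 := by
      rw [show ω = 2 * (ω * ((1 / 2 : ℝ) : ℂ)) from by push_cast; ring, Complex.cos_two_mul',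
        hC, hSn]
    have hEcos : 2 * E * Complex.cos (η : ℂ) = E ^ 2 + 1 := by
      have hEeq : E = Complex.cos (η : ℂ) + Complex.sin (η : ℂ) * Complex.I := by
        rw [hEdef, show Complex.I * (η : ℂ) = (η : ℂ) * Complex.I from by ring,
          Complex.exp_mul_I]
      rw [hEeq]
      linear_combination Complex.sin_sq_add_cos_sq ((η : ℂ)) - Complex.sin ((η : ℂ)) ^ 2 * Complex.I_sq
    have h2E : 2 * E * (Complex.cos ((η : ℂ)) + Complex.cos ω) = 0 := by
      linear_combination hEcos + 2 * E * hcω + hdet - (1 - E) ^ 2 * hS2 - (1 + E ^ 2) * hpy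
    have hsum : Complex.cos ((η : ℂ)) + Complex.cos ω = 0 :=
      (mul_eq_zero.mp h2E).resolve_left (mul_ne_zero two_ne_zero hE0)
    rw [Complex.cos_add_cos] at hsum
    have h2 : (2 : ℂ) ≠ 0 := two_ne_zero
    rcases mul_eq_zero.mp hsum with h | h
    · rcases mul_eq_zero.mp h with h' | h'
      · exact absurd h' h2
      · obtain ⟨kk, hk⟩ := Complex.cos_eq_zero_iff.mp h'
        refine ⟨-kk - 1, ?_⟩
        push_cast
        linear_combination (2 * (ω - (η : ℂ) + (2 * (kk : ℂ) + 1) * (Real.pi : ℂ))) * hk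
    · obtain ⟨kk, hk⟩ := Complex.cos_eq_zero_iff.mp h
      refine ⟨-kk - 1, ?_⟩
      push_cast
      linear_combination (-2 * (ω + (η : ℂ) - (2 * (kk : ℂ) + 1) * (Real.pi : ℂ))) * hk
end
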